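/- Let X be a topological space such that the countable power X^ℕ (with the product topology) is a Baire space. Then for every infinite index type ι, the power X^ι (with the product topology) is a Baire space. -/

import Mathlib

open Set Topology

namespace FKBaire

/-- Extend an injective-on-a-finite-set map to a larger finite set, injectively, with the
new values avoiding the old image. -/
lemma exists_injOn_extension {α β : Type*} [Infinite β] {s t : Set α} (hs : s.Finite)
    (ht : t.Finite) {f : α → β} (hf : Set.InjOn f s) :
    ∃ g : α → β, Set.InjOn g (s ∪ t) ∧ Set.EqOn g f s ∧ ∀ a ∈ t, a ∉ s → g a ∉ f '' s := by
  classical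
  have h1 : (f '' s).Finite := hs.image f
  have h2 : ((f '' s)ᶜ : Set β).Infinite := h1.infinite_compl
  haveI : Infinite ((f '' s)ᶜ : Set β) := h2.to_subtype
  have h3 : (t \ s).Finite := ht.diff
  haveI : Finite (t \ s : Set α) := h3.to_subtype
  obtain ⟨n, ⟨eq⟩⟩ := Finite.exists_equiv_fin (t \ s : Set α)
  let e : (t \ s : Set α) ↪ ((f '' s)ᶜ : Set β) :=
    eq.toEmbedding.trans (Fin.valEmbedding.trans (Infinite.natEmbedding _))
  refine ⟨fun a => if h : a ∈ t \ s then (e ⟨a, h⟩ : β) else f a, ?_, ?_, ?_⟩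
  · intro a ha b hb hab
    have hcase : ∀ x ∈ s ∪ t, x ∈ s ∨ x ∈ t \ s := by
      intro x hx
      rcases hx with hx | hx
      · exact Or.inl hx
      · by_cases h : x ∈ s
        · exact Or.inl h
        · exact Or.inr ⟨hx, h⟩
    dsimp only at hab
    rcases hcase a ha with ha' | ha' <;> rcases hcase b hb with hb' | hb'
    · rw [dif_neg (fun h : a ∈ t \ s => h.2 ha'), dif_neg (fun h : b ∈ t \ s => h.2 hb')] at hab
      exact hf ha' hb' hab
    · rw [dif_neg (fun h : a ∈ t \ s => h.2 ha'), dif_pos hb'] at hab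
      exact absurd (hab ▸ Set.mem_image_of_mem f ha') (e ⟨b, hb'⟩).2
    · rw [dif_pos ha', dif_neg (fun h : b ∈ t \ s => h.2 hb')] at hab
      exact absurd (hab ▸ Set.mem_image_of_mem f hb') (e ⟨a, ha'⟩).2
    · rw [dif_pos ha', dif_pos hb'] at hab
      have := e.injective (Subtype.coe_injective hab)
      exact congrArg Subtype.val this
  · intro a ha
    simp only [dif_neg (fun h : a ∈ t \ s => h.2 ha)]
  · intro a hat has
    simp only [dif_pos (Set.mem_diff_of_mem hat has)]
    exact (e ⟨a, _⟩).2

variable (ι X : Type*) [TopologicalSpace X]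

/-- A finite open box in `X^ι` together with a labelling of its support by naturals. -/
structure Node where
  p : ι → Set X
  φ : ι → ℕ
  isOpen' : ∀ i, IsOpen (p i)
  nonempty' : ∀ i, (p i).Nonempty
  finite' : {i | p i ≠ Set.univ}.Finite
  injOn' : Set.InjOn φ {i | p i ≠ Set.univ}

variable {ι X}

namespace Node

def supp (ν : Node ι X) : Set ι := {i | ν.p i ≠ Set.univ}

lemma finite_supp (ν : Node ι X) : ν.supp.Finite := ν.finite'

/-- The corresponding open box in `X^ℕ`. -/
def box (ν : Node ι X) : Set (ℕ → X) := {y | ∀ i ∈ ν.supp, y (ν.φ i) ∈ ν.p i}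

/-- The corresponding open cylinder in `X^ι`. -/
def cyl (ν : Node ι X) : Set (ι → X) := {x | ∀ i, x i ∈ ν.p i}

lemma isOpen_box (ν : Node ι X) : IsOpen ν.box := by
  have : ν.box = ⋂ i ∈ ν.supp, (fun y : ℕ → X => y (ν.φ i)) ⁻¹' (ν.p i) := by
    ext y; simp [box, Set.mem_iInter]
  rw [this]
  exact ν.finite_supp.isOpen_biInter fun i _ =>
    (ν.isOpen' i).preimage (continuous_apply _)

lemma isOpen_cyl (ν : Node ι X) : IsOpen ν.cyl := by
  have : ν.cyl = ⋂ i ∈ ν.supp, (fun x : ι → X => x i) ⁻¹' (ν.p i) := by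
    ext x
    simp only [cyl, Set.mem_setOf_eq, Set.mem_iInter, Set.mem_preimage]
    constructor
    · exact fun h i _ => h i
    · intro h i
      by_cases hi : i ∈ ν.supp
      · exact h i hi
      · simp only [supp, Set.mem_setOf_eq, not_not] at hi
        rw [hi]; trivial
  rw [this]
  exact ν.finite_supp.isOpen_biInter fun i _ =>
    (ν.isOpen' i).preimage (continuous_apply _)

lemma cyl_nonempty [Nonempty X] (ν : Node ι X) : ν.cyl.Nonempty :=
  ⟨fun i => (ν.nonempty' i).some, fun i => (ν.nonempty' i).some_mem⟩

lemma box_nonempty [Nonempty X] (ν : Node ι X) : ν.box.Nonempty := by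
  classical
  refine ⟨fun m => if h : ∃ i ∈ ν.supp, ν.φ i = m then (ν.nonempty' h.choose).some
    else Classical.arbitrary X, fun i hi => ?_⟩
  have h : ∃ j ∈ ν.supp, ν.φ j = ν.φ i := ⟨i, hi, rfl⟩
  simp only [dif_pos h]
  have hj := h.choose_spec
  have heq : h.choose = i := ν.injOn' hj.1 hi hj.2
  rw [show ν.p i = ν.p h.choose from by rw [heq]]
  exact (ν.nonempty' h.choose).some_mem

/-- `μ` refines `ν`. -/
def Extends (ν μ : Node ι X) : Prop :=
  (∀ i, μ.p i ⊆ ν.p i) ∧ ∀ i ∈ ν.supp, μ.φ i = ν.φ i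

lemma Extends.supp_subset {ν μ : Node ι X} (h : ν.Extends μ) : ν.supp ⊆ μ.supp := by
  intro i hi
  intro hcon
  exact hi (Set.univ_subset_iff.1 (hcon ▸ h.1 i))

lemma Extends.refl (ν : Node ι X) : ν.Extends ν := ⟨fun _ => le_rfl, fun _ _ => rfl⟩

lemma Extends.trans {ν μ τ : Node ι X} (h1 : ν.Extends μ) (h2 : μ.Extends τ) : ν.Extends τ :=
  ⟨fun i => (h2.1 i).trans (h1.1 i),
    fun i hi => ((h2.2 i (h1.supp_subset hi)).trans (h1.2 i hi))⟩

lemma Extends.cyl_subset {ν μ : Node ι X} (h : ν.Extends μ) : μ.cyl ⊆ ν.cyl :=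
  fun _ hx i => h.1 i (hx i)

lemma Extends.box_subset {ν μ : Node ι X} (h : ν.Extends μ) : μ.box ⊆ ν.box := by
  intro y hy i hi
  have hi' : i ∈ μ.supp := h.supp_subset hi
  have := hy i hi'
  rw [h.2 i hi] at this
  exact h.1 i this

end Node


open Node in
/-- Pull back an open subset of `X^ℕ` contained in `ν.box` to a refinement of `ν`. -/
lemma exists_pullback [Infinite ι] [Nonempty X] (ν : Node ι X) {r : Set (ℕ → X)}
    (hro : IsOpen r) (hrne : r.Nonempty) (hrb : r ⊆ ν.box) :
    ∃ q : Node ι X, ν.Extends q ∧ q.box ⊆ r := by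
  classical
  obtain ⟨y, hy⟩ := hrne
  obtain ⟨G, v, hv, hGv⟩ := isOpen_pi_iff.1 hro y hy
  set S := ν.supp with hS
  -- refined box data in `X^ℕ`
  set G' : Set ℕ := ↑G ∪ ν.φ '' S with hG'
  have hG'fin : G'.Finite := (G.finite_toSet).union (ν.finite_supp.image _)
  set v' : ℕ → Set X := fun m =>
    (if m ∈ G then v m else Set.univ) ∩ ⋂ i ∈ {i ∈ S | ν.φ i = m}, ν.p i with hv'
  have hsetfin : ∀ m : ℕ, {i ∈ S | ν.φ i = m}.Finite := fun m =>
    ν.finite_supp.subset (sep_subset _ _)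
  have hv'o : ∀ m, IsOpen (v' m) := by
    intro m
    refine IsOpen.inter ?_ ((hsetfin m).isOpen_biInter fun i _ => ν.isOpen' i)
    split
    · exact (hv m ‹_›).1
    · exact isOpen_univ
  have hyv' : ∀ m, y m ∈ v' m := by
    intro m
    constructor
    · split
      · exact (hv m ‹_›).2
      · trivial
    · refine Set.mem_iInter₂.2 fun i hi => ?_
      have := hrb hy i hi.1
      rwa [hi.2] at this
  have hv'G : ∀ m ∈ G, v' m ⊆ v m := by
    intro m hm
    rw [hv']
    simp only [if_pos hm]
    exact Set.inter_subset_left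
  -- partial inverse of φ
  set f : ℕ → ι := fun m => if h : ∃ i ∈ S, ν.φ i = m then h.choose else Classical.arbitrary ι
    with hf
  have hfφ : ∀ i ∈ S, f (ν.φ i) = i := by
    intro i hi
    have h : ∃ j ∈ S, ν.φ j = ν.φ i := ⟨i, hi, rfl⟩
    rw [hf]; simp only [dif_pos h]
    exact ν.injOn' h.choose_spec.1 hi h.choose_spec.2
  have hfim : f '' (ν.φ '' S) = S := by
    apply Set.Subset.antisymm
    · rintro _ ⟨_, ⟨i, hi, rfl⟩, rfl⟩
      rw [hfφ i hi]; exact hi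
    · intro i hi
      exact ⟨ν.φ i, Set.mem_image_of_mem _ hi, hfφ i hi⟩
  have hfinj : Set.InjOn f (ν.φ '' S) := by
    rintro _ ⟨i, hi, rfl⟩ _ ⟨j, hj, rfl⟩ hij
    rw [hfφ i hi, hfφ j hj] at hij
    rw [hij]
  obtain ⟨c, hcinj, hceq, hcnew⟩ :=
    exists_injOn_extension (ν.finite_supp.image ν.φ) G.finite_toSet hfinj
  have hcinj' : Set.InjOn c G' := hcinj.mono (by rw [hG', Set.union_comm])
  have hcφ : ∀ i ∈ S, c (ν.φ i) = i := fun i hi =>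
    (hceq (Set.mem_image_of_mem _ hi)).trans (hfφ i hi)
  have hφG' : ∀ i ∈ S, ν.φ i ∈ G' := fun i hi => Or.inr (Set.mem_image_of_mem _ hi)
  have hSc : S ⊆ c '' G' := fun i hi => ⟨ν.φ i, hφG' i hi, hcφ i hi⟩
  -- the new node
  set P : ι → Set X := fun i => ν.p i ∩ ⋂ m ∈ {m ∈ G' | c m = i}, v' m with hP
  have hGfin2 : ∀ i, {m ∈ G' | c m = i}.Finite := fun i => hG'fin.subset (sep_subset _ _)
  have hsingle : ∀ m ∈ G', {m' ∈ G' | c m' = c m} = {m} := by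
    intro m hm
    ext m'
    simp only [Set.mem_setOf_eq, Set.mem_singleton_iff]
    constructor
    · rintro ⟨hm', he⟩; exact hcinj' hm' hm he
    · rintro rfl; exact ⟨hm, rfl⟩
  have hPc : ∀ m ∈ G', P (c m) = ν.p (c m) ∩ v' m := by
    intro m hm
    rw [hP]
    simp only
    rw [hsingle m hm]
    simp
  have hPnot : ∀ i, (¬ ∃ m ∈ G', c m = i) → P i = ν.p i := by
    intro i hi
    have : {m ∈ G' | c m = i} = ∅ := by
      ext m; simp only [Set.mem_setOf_eq, Set.mem_empty_iff_false, iff_false]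
      rintro ⟨h1, h2⟩; exact hi ⟨m, h1, h2⟩
    rw [hP]; simp only [this]; simp
  have hymem : ∀ m ∈ G', y m ∈ ν.p (c m) := by
    intro m hm
    by_cases himg : m ∈ ν.φ '' S
    · obtain ⟨i, hi, rfl⟩ := himg
      rw [hcφ i hi]
      exact hrb hy i hi
    · have hmG : m ∈ (G : Set ℕ) := by
        rcases hm with h | h
        · exact h
        · exact absurd h himg
      have : c m ∉ f '' (ν.φ '' S) := hcnew m hmG himg
      rw [hfim] at this
      have : ν.p (c m) = Set.univ := not_not.1 this
      rw [this]; trivial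
  have hPne : ∀ i, (P i).Nonempty := by
    intro i
    by_cases h : ∃ m ∈ G', c m = i
    · obtain ⟨m, hm, rfl⟩ := h
      rw [hPc m hm]
      exact ⟨y m, hymem m hm, hyv' m⟩
    · rw [hPnot i h]
      exact ν.nonempty' i
  have hPsub : ∀ i, P i ⊆ ν.p i := fun i => Set.inter_subset_left
  have hPsupp : {i | P i ≠ Set.univ} ⊆ c '' G' ∪ S := by
    intro i hi
    by_cases h : ∃ m ∈ G', c m = i
    · obtain ⟨m, hm, rfl⟩ := h
      exact Or.inl ⟨m, hm, rfl⟩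
    · rw [Set.mem_setOf_eq, hPnot i h] at hi
      exact Or.inr hi
  have hcG'S : c '' G' ∪ S = c '' G' := Set.union_eq_self_of_subset_right hSc
  -- φ for the new node
  set Φ : ι → ℕ := fun i => if h : ∃ m ∈ G', c m = i then h.choose else ν.φ i with hΦ
  have hΦc : ∀ m ∈ G', Φ (c m) = m := by
    intro m hm
    have h : ∃ m' ∈ G', c m' = c m := ⟨m, hm, rfl⟩
    rw [hΦ]; simp only [dif_pos h]
    exact hcinj' h.choose_spec.1 hm h.choose_spec.2
  have hΦinj : Set.InjOn Φ (c '' G') := by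
    rintro _ ⟨m, hm, rfl⟩ _ ⟨m', hm', rfl⟩ he
    rw [hΦc m hm, hΦc m' hm'] at he
    rw [he]
  refine ⟨⟨P, Φ, fun i => (ν.isOpen' i).inter ((hGfin2 i).isOpen_biInter fun m _ => hv'o m),
      hPne, ((hG'fin.image c).union ν.finite_supp).subset hPsupp,
      hΦinj.mono (by rw [← hcG'S]; exact hPsupp)⟩, ⟨?_, ?_⟩, ?_⟩
  · exact hPsub
  · -- φ agrees on ν.supp
    intro i hi
    show Φ i = ν.φ i
    have h2 : i = c (ν.φ i) := (hcφ i hi).symm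
    conv_lhs => rw [h2]
    exact hΦc _ (hφG' i hi)
  · -- box ⊆ r
    intro z hz
    refine hGv ?_
    intro m hm
    have hmG' : m ∈ G' := Or.inl hm
    by_cases hP : P (c m) = Set.univ
    · -- then v' m = univ hence v m = univ
      have h1 : ν.p (c m) ∩ v' m = Set.univ := by rw [← hPc m hmG']; exact hP
      have h2 : Set.univ ⊆ v' m := by rw [← h1]; exact Set.inter_subset_right
      have h3 : Set.univ ⊆ v m := h2.trans (hv'G m hm)
      exact h3 trivial
    · have hin : c m ∈ {i | P i ≠ Set.univ} := hP
      have := hz (c m) hin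
      change z (Φ (c m)) ∈ P (c m) at this
      rw [hΦc m hmG'] at this
      have hsub : P (c m) ⊆ v' m := by
        rw [hPc m hmG']; exact Set.inter_subset_right
      exact hv'G m hm (hsub this)


/-- Refine a node into a dense open subset of `X^ι`. -/
lemma exists_refine [Nonempty X] (q : Node ι X) {U : Set (ι → X)}
    (hUo : IsOpen U) (hUd : Dense U) :
    ∃ μ : Node ι X, q.Extends μ ∧ μ.cyl ⊆ U := by
  classical
  obtain ⟨x, hxq, hxU⟩ := hUd.inter_open_nonempty q.cyl q.isOpen_cyl q.cyl_nonempty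
  obtain ⟨I, u, hu, hIu⟩ := isOpen_pi_iff.1 hUo x hxU
  obtain ⟨g, hginj, hgeq, -⟩ :=
    exists_injOn_extension q.finite_supp I.finite_toSet (q.injOn')
  set P : ι → Set X := fun i => q.p i ∩ (if i ∈ I then u i else Set.univ) with hP
  have hPsupp : {i | P i ≠ Set.univ} ⊆ q.supp ∪ ↑I := by
    intro i hi
    by_contra hcon
    rw [Set.mem_union] at hcon
    push_neg at hcon
    apply hi
    show q.p i ∩ (if i ∈ I then u i else Set.univ) = Set.univ
    rw [if_neg (fun h => hcon.2 (Finset.mem_coe.2 h)), not_not.1 hcon.1]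
    simp
  refine ⟨⟨P, g, ?_, ?_, ?_, hginj.mono hPsupp⟩, ⟨?_, ?_⟩, ?_⟩
  · intro i
    refine (q.isOpen' i).inter ?_
    split
    · exact (hu i ‹_›).1
    · exact isOpen_univ
  · intro i
    refine ⟨x i, hxq i, ?_⟩
    split
    · exact (hu i ‹_›).2
    · trivial
  · exact (q.finite_supp.union I.finite_toSet).subset hPsupp
  · exact fun i => Set.inter_subset_left
  · exact fun i hi => hgeq hi
  · intro z hz
    refine hIu ?_
    intro i hi
    have h2 : P i ⊆ u i := by
      show (q.p i ∩ if i ∈ I then u i else Set.univ) ⊆ u i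
      rw [if_pos (Finset.mem_coe.1 hi)]
      exact Set.inter_subset_right
    exact h2 (hz i)

/-- Combined child lemma. -/
lemma exists_child [Infinite ι] [Nonempty X] (ν : Node ι X) {U : Set (ι → X)}
    (hUo : IsOpen U) (hUd : Dense U) {r : Set (ℕ → X)}
    (hro : IsOpen r) (hrne : r.Nonempty) (hrb : r ⊆ ν.box) :
    ∃ μ : Node ι X, ν.Extends μ ∧ μ.cyl ⊆ U ∧ μ.box ⊆ r := by
  obtain ⟨q, hq1, hq2⟩ := exists_pullback ν hro hrne hrb
  obtain ⟨μ, hm1, hm2⟩ := exists_refine q hUo hUd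
  exact ⟨μ, hq1.trans hm1, hm2, (Node.Extends.box_subset hm1).trans hq2⟩

/-- A maximal antichain of children below `ν` whose boxes form a dense family in `ν.box`. -/
lemma exists_antichain [Infinite ι] [Nonempty X] (ν : Node ι X) {U : Set (ι → X)}
    (hUo : IsOpen U) (hUd : Dense U) :
    ∃ A : Set (Node ι X),
      (∀ μ ∈ A, ν.Extends μ ∧ μ.cyl ⊆ U) ∧
      (A.Pairwise fun μ μ' => Disjoint μ.box μ'.box) ∧
      (∀ r : Set (ℕ → X), IsOpen r → (r ∩ ν.box).Nonempty →
        ∃ μ ∈ A, (r ∩ μ.box).Nonempty) := by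
  classical
  set S : Set (Set (Node ι X)) :=
    {A | (∀ μ ∈ A, ν.Extends μ ∧ μ.cyl ⊆ U) ∧
      A.Pairwise fun μ μ' => Disjoint μ.box μ'.box} with hSdef
  obtain ⟨A, hA⟩ := zorn_subset S (by
    intro ch hch hchain
    refine ⟨⋃₀ ch, ⟨?_, ?_⟩, fun s hs => Set.subset_sUnion_of_mem hs⟩
    · rintro μ ⟨B, hB, hμ⟩
      exact (hch hB).1 μ hμ
    · rintro μ ⟨B, hB, hμ⟩ μ' ⟨B', hB', hμ'⟩ hne
      rcases hchain.total hB hB' with h | h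
      · exact (hch hB').2 (h hμ) hμ' hne
      · exact (hch hB).2 hμ (h hμ') hne)
  refine ⟨A, hA.prop.1, hA.prop.2, ?_⟩
  intro r hro hrne
  by_contra hcon
  push_neg at hcon
  have hdisj : ∀ μ ∈ A, r ∩ μ.box = ∅ := hcon
  obtain ⟨μ', hext, hcyl, hbox⟩ := exists_child ν hUo hUd (hro.inter ν.isOpen_box) hrne
    Set.inter_subset_right
  have hμ'A : μ' ∉ A := by
    intro hmem
    have h1 : μ'.box ⊆ r := hbox.trans Set.inter_subset_left
    obtain ⟨z, hz⟩ := μ'.box_nonempty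
    have : z ∈ r ∩ μ'.box := ⟨h1 hz, hz⟩
    rw [hdisj μ' hmem] at this
    exact this
  have hins : insert μ' A ∈ S := by
    constructor
    · rintro μ (rfl | hμ)
      · exact ⟨hext, hcyl⟩
      · exact hA.prop.1 μ hμ
    · intro a ha b hb hne
      rcases ha with rfl | ha <;> rcases hb with rfl | hb
      · exact absurd rfl hne
      · refine Set.disjoint_left.2 fun z hz hz' => ?_
        have : z ∈ r ∩ b.box := ⟨(hbox.trans Set.inter_subset_left) hz, hz'⟩
        rw [hdisj b hb] at this; exact this
      · refine Set.disjoint_left.2 fun z hz hz' => ?_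
        have : z ∈ r ∩ a.box := ⟨(hbox.trans Set.inter_subset_left) hz', hz⟩
        rw [hdisj a ha] at this; exact this
      · exact hA.prop.2 ha hb hne
  have := hA.2 hins (Set.subset_insert _ _)
  exact hμ'A (this (Set.mem_insert _ _))

end FKBaire

open FKBaire FKBaire.Node

/-- Fleissner--Kunen: if `X^ω` is Baire then every infinite power of `X` is Baire. -/
theorem baire_power_of_baire_countable_power (X : Type*) [TopologicalSpace X]
    (h : BaireSpace (ℕ → X)) (ι : Type*) [Infinite ι] : BaireSpace (ι → X) := by
  classical
  constructor
  intro f hfo hfd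
  rw [dense_iff_inter_open]
  intro W hWo hWne
  obtain ⟨x₀, hx₀⟩ := hWne
  haveI : Nonempty X := ⟨x₀ (Classical.arbitrary ι)⟩
  haveI := h
  -- the root node, a basic box inside `W`
  obtain ⟨I, u, hu, hIu⟩ := isOpen_pi_iff.1 hWo x₀ hx₀
  obtain ⟨g, hginj, -, -⟩ := FKBaire.exists_injOn_extension (Set.finite_empty (α := ι))
    I.finite_toSet (Set.injOn_empty (fun _ : ι => (0 : ℕ)))
  have hginj' : Set.InjOn g ↑I := hginj.mono (by rw [Set.empty_union])
  have hrootsupp : {i | (if i ∈ I then u i else Set.univ) ≠ Set.univ} ⊆ ↑I := by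
    intro i hi
    by_contra hcon
    exact hi (by rw [if_neg (fun hh => hcon (Finset.mem_coe.2 hh))])
  set ν₀ : Node ι X := ⟨fun i => if i ∈ I then u i else Set.univ, g,
    fun i => by show IsOpen (if i ∈ I then u i else Set.univ)
                split; exacts [(hu i ‹_›).1, isOpen_univ],
    fun i => by show (if i ∈ I then u i else Set.univ).Nonempty
                split; exacts [⟨x₀ i, (hu i ‹_›).2⟩, ⟨x₀ i, trivial⟩],
    I.finite_toSet.subset hrootsupp, hginj'.mono hrootsupp⟩ with hν₀
  have hcylW : ν₀.cyl ⊆ W := by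
    intro z hz
    refine hIu fun i hi => ?_
    have := hz i
    show z i ∈ u i
    rw [show ν₀.p i = if i ∈ I then u i else Set.univ from rfl,
      if_pos (Finset.mem_coe.1 hi)] at this
    exact this
  -- maximal antichains of children
  have hAex : ∀ (n : ℕ) (ν : Node ι X), ∃ A : Set (Node ι X),
      (∀ μ ∈ A, ν.Extends μ ∧ μ.cyl ⊆ f n) ∧
      (A.Pairwise fun μ μ' => Disjoint μ.box μ'.box) ∧
      (∀ r : Set (ℕ → X), IsOpen r → (r ∩ ν.box).Nonempty →
        ∃ μ ∈ A, (r ∩ μ.box).Nonempty) :=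
    fun n ν => exists_antichain ν (hfo n) (hfd n)
  choose A hA1 hA2 hA3 using hAex
  -- levels of the tree
  let Level : ℕ → Set (Node ι X) := fun n =>
    Nat.rec ({ν₀} : Set (Node ι X)) (fun n L => ⋃ ν ∈ L, A n ν) n
  have hLevel0 : Level 0 = {ν₀} := rfl
  have hLevelS : ∀ n, Level (n + 1) = ⋃ ν ∈ Level n, A n ν := fun _ => rfl
  have hboxsub : ∀ n ν μ, μ ∈ A n ν → μ.box ⊆ ν.box :=
    fun n ν μ hμ => ((hA1 n ν μ hμ).1).box_subset
  have hdisj : ∀ n, (Level n).Pairwise fun ν ν' => Disjoint ν.box ν'.box := by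
    intro n
    induction n with
    | zero => rw [hLevel0]; exact Set.pairwise_singleton _ _
    | succ n ih =>
      rw [hLevelS]
      intro μ hμ μ' hμ' hne
      simp only [Set.mem_iUnion] at hμ hμ'
      obtain ⟨ν, hν, hμA⟩ := hμ
      obtain ⟨ν', hν', hμ'A⟩ := hμ'
      by_cases hveq : ν = ν'
      · subst hveq
        exact hA2 n ν hμA hμ'A hne
      · exact (ih hν hν' hveq).mono (hboxsub n ν μ hμA) (hboxsub n ν' μ' hμ'A)
  -- the dense-in-`G 0` open sets
  let G : ℕ → Set (ℕ → X) := fun n => ⋃ ν ∈ Level n, ν.box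
  have hGopen : ∀ n, IsOpen (G n) :=
    fun n => isOpen_iUnion fun ν => isOpen_iUnion fun _ => ν.isOpen_box
  have hG0 : G 0 = ν₀.box := by
    show (⋃ ν ∈ Level 0, Node.box ν) = ν₀.box
    rw [hLevel0]; simp
  have hstep : ∀ n O, IsOpen O → (O ∩ G n).Nonempty → (O ∩ G (n + 1)).Nonempty := by
    rintro n O hO ⟨z, hzO, hzG⟩
    obtain ⟨ν, hν, hzb⟩ := Set.mem_iUnion₂.1 hzG
    obtain ⟨μ, hμ, w, hwO, hwb⟩ := hA3 n ν O hO ⟨z, hzO, hzb⟩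
    refine ⟨w, hwO, Set.mem_iUnion₂.2 ⟨μ, ?_, hwb⟩⟩
    rw [hLevelS]
    exact Set.mem_iUnion₂.2 ⟨ν, hν, hμ⟩
  have hGd : ∀ n, ν₀.box ⊆ closure (G n) := by
    intro n
    induction n with
    | zero => rw [hG0]; exact subset_closure
    | succ n ih =>
      intro z hz
      rw [mem_closure_iff]
      intro O hO hzO
      have h1 : (O ∩ G n).Nonempty := by
        have h2 := ih hz
        rw [mem_closure_iff] at h2
        exact h2 O hO hzO
      exact hstep n O hO h1
  -- apply Baire in `X^ℕ`
  let H : ℕ → Set (ℕ → X) := fun n => G n ∪ (closure (G 0))ᶜ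
  have hHo : ∀ n, IsOpen (H n) := fun n => (hGopen n).union isClosed_closure.isOpen_compl
  have hHd : ∀ n, Dense (H n) := by
    intro n z
    by_cases hz : z ∈ closure (G 0)
    · have h1 : closure (G 0) ⊆ closure (G n) := by
        rw [hG0]
        exact closure_minimal (hGd n) isClosed_closure
      exact closure_mono Set.subset_union_left (h1 hz)
    · exact subset_closure (Or.inr hz)
  obtain ⟨y, hy1, hy2⟩ := (dense_iInter_of_isOpen hHo hHd).inter_open_nonempty
    ν₀.box ν₀.isOpen_box ν₀.box_nonempty
  have hyG : ∀ n, y ∈ G n := by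
    intro n
    rcases Set.mem_iInter.1 hy2 n with h1 | h1
    · exact h1
    · exact absurd (subset_closure (show y ∈ G 0 by rw [hG0]; exact hy1)) h1
  -- extract a branch through the tree
  have key : ∀ n (ν : {ν : Node ι X // ν ∈ Level n ∧ y ∈ ν.box}),
      ∃ μ : Node ι X, μ ∈ A n ν.1 ∧ μ ∈ Level (n + 1) ∧ y ∈ μ.box := by
    rintro n ⟨ν, hν, hyb⟩
    obtain ⟨μ, hμL, hyμ⟩ := Set.mem_iUnion₂.1 (hyG (n + 1))
    have hμL' := hμL
    rw [hLevelS] at hμL'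
    obtain ⟨ν', hν', hμA⟩ := Set.mem_iUnion₂.1 hμL'
    have hνν' : ν = ν' := by
      by_contra hne
      exact Set.disjoint_left.1 (hdisj n hν hν' hne) hyb (hboxsub n ν' μ hμA hyμ)
    subst hνν'
    exact ⟨μ, hμA, hμL, hyμ⟩
  choose step hst1 hst2 hst3 using key
  have hb0mem : ν₀ ∈ Level 0 := by rw [hLevel0]; exact Set.mem_singleton _
  let b : ∀ n, {ν : Node ι X // ν ∈ Level n ∧ y ∈ ν.box} := fun n =>
    Nat.rec ⟨ν₀, hb0mem, hy1⟩ (fun n prev => ⟨step n prev, hst2 n prev, hst3 n prev⟩) n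
  have hbA : ∀ n, (b (n + 1)).1 ∈ A n (b n).1 := fun n => hst1 n (b n)
  have hext : ∀ n, ((b n).1).Extends ((b (n + 1)).1) := fun n => (hA1 _ _ _ (hbA n)).1
  have hcylf : ∀ n, ((b (n + 1)).1).cyl ⊆ f n := fun n => (hA1 _ _ _ (hbA n)).2
  have hyb : ∀ n, y ∈ ((b n).1).box := fun n => (b n).2.2
  have hextle : ∀ k m, k ≤ m → ((b k).1).Extends ((b m).1) := by
    intro k m hkm
    induction m, hkm using Nat.le_induction with
    | base => exact Extends.refl _
    | succ m hkm ih => exact ih.trans (hext m)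
  -- the point of `X^ι`
  set x : ι → X := fun i => if hs : ∃ n, i ∈ ((b n).1).supp
    then y (((b hs.choose).1).φ i) else Classical.arbitrary X with hx
  have hxcyl : ∀ n, x ∈ ((b n).1).cyl := by
    intro n i
    by_cases hs : ∃ k, i ∈ ((b k).1).supp
    · have hk : i ∈ ((b hs.choose).1).supp := hs.choose_spec
      have hxi : x i = y (((b hs.choose).1).φ i) := by rw [hx]; simp only [dif_pos hs]
      have h1 : ((b hs.choose).1).Extends ((b (max n hs.choose)).1) :=
        hextle _ _ (le_max_right _ _)
      have h2 : ((b n).1).Extends ((b (max n hs.choose)).1) :=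
        hextle _ _ (le_max_left _ _)
      have h3 : y (((b (max n hs.choose)).1).φ i) ∈ ((b (max n hs.choose)).1).p i :=
        hyb _ i (h1.supp_subset hk)
      rw [h1.2 i hk] at h3
      rw [hxi]
      exact h2.1 i h3
    · push_neg at hs
      have h4 : ((b n).1).p i = Set.univ := not_not.1 (hs n)
      rw [h4]
      trivial
  exact ⟨x, hcylW (hxcyl 0), Set.mem_iInter.2 fun n => hcylf n (hxcyl (n + 1))⟩
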